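/- Let α = e^{2πi/3}, and for k ∈ ℂ with k ≠ 0 and arbitrary p, q ∈ ℂ define the 3×3 complex matrices G = [[α, α^2, 1],[α^2 k, α k, k],[k^2, k^2, k^2]], L = [[0,1,0],[0,0,1],[k^3 − q, −p, 0]], Λ = diag(α, α^2, 1), Q₁ = −(p/3)·[[α^2, α, 1],[α^2, α, 1],[α^2, α, 1]], and Q₂ = −(q/3)·[[α, α^2, 1],[α, α^2, 1],[α, α^2, 1]]. Then det G = −3√3·i·k^3 (so G is invertible), and L·G = G·(k·Λ + (1/k)·Q₁ + (1/k^2)·Q₂); equivalently G⁻¹·L·G = k·Λ + (1/k)·Q₁ + (1/k^2)·Q₂. -/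
import Mathlib


open Complex

/-- The primitive cube root of unity `α = e^{2πi/3}`. -/
noncomputable def αc : ℂ := Complex.exp (2 * Real.pi * Complex.I / 3)

/-- The gauge matrix `G`. -/
noncomputable def Gmat (k : ℂ) : Matrix (Fin 3) (Fin 3) ℂ :=
  !![αc, αc ^ 2, 1;
     αc ^ 2 * k, αc * k, k;
     k ^ 2, k ^ 2, k ^ 2]

/-- The companion-form Lax matrix `L` of the third-order spectral problem. -/
noncomputable def Lmat (p q k : ℂ) : Matrix (Fin 3) (Fin 3) ℂ :=
  !![0, 1, 0;
     0, 0, 1;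
     k ^ 3 - q, -p, 0]

/-- The diagonal matrix `Λ = diag(α, α², 1)`. -/
noncomputable def Λmat : Matrix (Fin 3) (Fin 3) ℂ :=
  Matrix.diagonal ![αc, αc ^ 2, 1]

/-- The perturbation matrix `Q₁`. -/
noncomputable def Q1mat (p : ℂ) : Matrix (Fin 3) (Fin 3) ℂ :=
  (-(p / 3)) • !![αc ^ 2, αc, 1;
                  αc ^ 2, αc, 1;
                  αc ^ 2, αc, 1]

/-- The perturbation matrix `Q₂`. -/
noncomputable def Q2mat (q : ℂ) : Matrix (Fin 3) (Fin 3) ℂ :=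
  (-(q / 3)) • !![αc, αc ^ 2, 1;
                  αc, αc ^ 2, 1;
                  αc, αc ^ 2, 1]

lemma hαval : αc = -1/2 + (Real.sqrt 3 : ℂ)/2 * Complex.I := by
  have h : (2 * Real.pi * Complex.I / 3 : ℂ) = ((2 * Real.pi / 3 : ℝ) : ℂ) * Complex.I := by
    push_cast; ring
  rw [αc, h, Complex.exp_mul_I]
  have hc : Real.cos (2 * Real.pi / 3) = -(1/2) := by
    rw [show (2 * Real.pi / 3 : ℝ) = Real.pi - Real.pi / 3 by ring, Real.cos_pi_sub,
      Real.cos_pi_div_three]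
  have hs : Real.sin (2 * Real.pi / 3) = Real.sqrt 3 / 2 := by
    rw [show (2 * Real.pi / 3 : ℝ) = Real.pi - Real.pi / 3 by ring, Real.sin_pi_sub,
      Real.sin_pi_div_three]
  rw [← Complex.ofReal_cos, ← Complex.ofReal_sin, hc, hs]; push_cast; ring

lemma hαsq : αc ^ 2 = -1/2 - (Real.sqrt 3 : ℂ)/2 * Complex.I := by
  rw [hαval]
  have h3 : ((Real.sqrt 3 : ℝ) : ℂ) ^ 2 = 3 := by
    norm_cast; rw [Real.sq_sqrt]; norm_num
  linear_combination (Complex.I^2/4) * h3 + (3/4 : ℂ) * Complex.I_sq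

lemma hsum : αc ^ 2 + αc + 1 = 0 := by rw [hαsq, hαval]; ring
lemma hcube : αc ^ 3 = 1 := by linear_combination (αc - 1) * hsum
lemma hdiffα : αc - αc ^ 2 = (Real.sqrt 3 : ℂ) * Complex.I := by rw [hαsq, hαval]; ring

lemma hΛ : Λmat = !![αc, 0, 0; 0, αc ^ 2, 0; 0, 0, 1] := by
  ext i j
  fin_cases i <;> fin_cases j <;> simp [Λmat, Matrix.diagonal_apply, Fin.ext_iff, Matrix.vecHead, Matrix.vecTail]

/-- `det G = −3√3·i·k³`, and the gauge transformation conjugates `L` into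
`kΛ + Q₁/k + Q₂/k²`. -/
theorem gauge_transformation (k p q : ℂ) (hk : k ≠ 0) :
    (Gmat k).det = -3 * (Real.sqrt 3 : ℂ) * Complex.I * k ^ 3 ∧
    Lmat p q k * Gmat k
      = Gmat k * (k • Λmat + k⁻¹ • Q1mat p + (k ^ 2)⁻¹ • Q2mat q) ∧
    (Gmat k)⁻¹ * Lmat p q k * Gmat k
      = k • Λmat + k⁻¹ • Q1mat p + (k ^ 2)⁻¹ • Q2mat q := by
  have hk1 : k * k⁻¹ = 1 := mul_inv_cancel₀ hk
  have hk2 : k ^ 2 * k⁻¹ ^ 2 = 1 := by rw [← mul_pow, hk1, one_pow]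
  have hdet : (Gmat k).det = -3 * (Real.sqrt 3 : ℂ) * Complex.I * k ^ 3 := by
    simp [Gmat, Matrix.det_fin_three]
    linear_combination (-(k^3)*αc) * hcube + (-3*k^3) * hdiffα
  have hmain : Lmat p q k * Gmat k
      = Gmat k * (k • Λmat + k⁻¹ • Q1mat p + (k ^ 2)⁻¹ • Q2mat q) := by
    ext i j
    fin_cases i <;> fin_cases j <;>
      simp [Gmat, Lmat, hΛ, Q1mat, Q2mat, Matrix.mul_apply, Fin.sum_univ_three,
        Matrix.vecHead, Matrix.vecTail, inv_pow]
    · linear_combination (p * k⁻¹ * αc^2/3 + q * k⁻¹^2 * αc/3) * hsum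
    · linear_combination (-(αc*k)) * hcube + (p * k⁻¹ * αc/3 + q * k⁻¹^2 * αc^2/3) * hsum
    · linear_combination (p * k⁻¹/3 + q * k⁻¹^2/3) * hsum
    · linear_combination (-(k^2)) * hcube + (k * (p * k⁻¹ * αc^2 + q * k⁻¹^2 * αc)/3) * hsum
    · linear_combination (-(k^2)) * hcube + (k * (p * k⁻¹ * αc + q * k⁻¹^2 * αc^2)/3) * hsum
    · linear_combination (k * (p * k⁻¹ + q * k⁻¹^2)/3) * hsum
    · linear_combination (p * αc^2 * k) * hk1 + (q * αc) * hk2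
    · linear_combination (p * αc * k) * hk1 + (q * αc^2) * hk2
    · linear_combination (p * k) * hk1 + q * hk2
  refine ⟨hdet, hmain, ?_⟩
  have hdu : IsUnit (Gmat k).det := by
    rw [hdet]
    apply isUnit_iff_ne_zero.2
    have h3 : (Real.sqrt 3 : ℂ) ≠ 0 := by
      norm_cast
      positivity
    simp [hk, h3, Complex.I_ne_zero]
  rw [Matrix.mul_assoc, hmain, ← Matrix.mul_assoc, Matrix.nonsing_inv_mul _ hdu, Matrix.one_mul]
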